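/- For all real numbers a₁, a₂ ≥ 0 and b₁, b₂ > 0 and any real p > 1, one has |a₁ - a₂|^p ≥ |b₁ - b₂|^{p-2}(b₁ - b₂)·(a₁^p / b₁^{p-1} - a₂^p / b₂^{p-1}). -/

import Mathlib

open Real Set

lemma radon_aux (p x y s t : ℝ) (hp : 1 ≤ p) (hx : 0 ≤ x) (hy : 0 ≤ y)
    (hs : 0 < s) (ht : 0 < t) :
    (x + y) ^ p / (s + t) ^ (p - 1) ≤ x ^ p / s ^ (p - 1) + y ^ p / t ^ (p - 1) := by
  have hst : 0 < s + t := by linarith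
  have hc := (convexOn_rpow hp).2 (mem_Ici.2 (div_nonneg hx hs.le))
    (mem_Ici.2 (div_nonneg hy ht.le)) (div_nonneg hs.le hst.le) (div_nonneg ht.le hst.le)
    (by field_simp)
  simp only [smul_eq_mul] at hc
  have e1 : s / (s + t) * (x / s) + t / (s + t) * (y / t) = (x + y) / (s + t) := by
    field_simp
  rw [e1, Real.div_rpow (by linarith) hst.le, Real.div_rpow hx hs.le,
    Real.div_rpow hy ht.le] at hc
  have hS : s ^ p = s ^ (p - 1) * s := by
    have h := Real.rpow_add hs (p - 1) 1
    rw [Real.rpow_one, show p - 1 + 1 = p from by ring] at h; exact h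
  have hT : t ^ p = t ^ (p - 1) * t := by
    have h := Real.rpow_add ht (p - 1) 1
    rw [Real.rpow_one, show p - 1 + 1 = p from by ring] at h; exact h
  have hU : (s + t) ^ p = (s + t) ^ (p - 1) * (s + t) := by
    have h := Real.rpow_add hst (p - 1) 1
    rw [Real.rpow_one, show p - 1 + 1 = p from by ring] at h; exact h
  rw [hS, hT, hU] at hc
  have hS1 : 0 < s ^ (p - 1) := Real.rpow_pos_of_pos hs _
  have hT1 : 0 < t ^ (p - 1) := Real.rpow_pos_of_pos ht _
  have hU1 : 0 < (s + t) ^ (p - 1) := Real.rpow_pos_of_pos hst _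
  have h2 := mul_le_mul_of_nonneg_right hc hst.le
  calc (x + y) ^ p / (s + t) ^ (p - 1)
      = (x + y) ^ p / ((s + t) ^ (p - 1) * (s + t)) * (s + t) := by field_simp
    _ ≤ (s / (s + t) * (x ^ p / (s ^ (p - 1) * s)) + t / (s + t) * (y ^ p / (t ^ (p - 1) * t))) * (s + t) := h2
    _ = x ^ p / s ^ (p - 1) + y ^ p / t ^ (p - 1) := by field_simp

lemma picone_aux (p a₁ a₂ b₁ b₂ : ℝ) (hp : 1 < p)
    (ha₁ : 0 ≤ a₁) (ha₂ : 0 ≤ a₂) (hb₂ : 0 < b₂) (hb : b₂ < b₁) :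
    (b₁ - b₂) ^ (p - 1) * (a₁ ^ p / b₁ ^ (p - 1) - a₂ ^ p / b₂ ^ (p - 1)) ≤ |a₁ - a₂| ^ p := by
  have hd : 0 < b₁ - b₂ := by linarith
  have h1 : a₁ ≤ |a₁ - a₂| + a₂ := by
    have := le_abs_self (a₁ - a₂); linarith
  have h2 : a₁ ^ p ≤ (|a₁ - a₂| + a₂) ^ p :=
    Real.rpow_le_rpow ha₁ h1 (by linarith)
  have h3 := radon_aux p (|a₁ - a₂|) a₂ (b₁ - b₂) b₂ hp.le (abs_nonneg _) ha₂ hd hb₂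
  rw [show b₁ - b₂ + b₂ = b₁ by ring] at h3
  have hb₁ : (0:ℝ) < b₁ := by linarith
  have hB1 : 0 < b₁ ^ (p - 1) := Real.rpow_pos_of_pos hb₁ _
  have hD : 0 < (b₁ - b₂) ^ (p - 1) := Real.rpow_pos_of_pos hd _
  have h4 : a₁ ^ p / b₁ ^ (p - 1) ≤ |a₁ - a₂| ^ p / (b₁ - b₂) ^ (p - 1) + a₂ ^ p / b₂ ^ (p - 1) := by
    calc a₁ ^ p / b₁ ^ (p - 1) ≤ (|a₁ - a₂| + a₂) ^ p / b₁ ^ (p - 1) := by gcongr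
      _ ≤ _ := h3
  have h5 : a₁ ^ p / b₁ ^ (p - 1) - a₂ ^ p / b₂ ^ (p - 1) ≤ |a₁ - a₂| ^ p / (b₁ - b₂) ^ (p - 1) := by
    linarith
  calc (b₁ - b₂) ^ (p - 1) * (a₁ ^ p / b₁ ^ (p - 1) - a₂ ^ p / b₂ ^ (p - 1))
      ≤ (b₁ - b₂) ^ (p - 1) * (|a₁ - a₂| ^ p / (b₁ - b₂) ^ (p - 1)) :=
        mul_le_mul_of_nonneg_left h5 hD.le
    _ = |a₁ - a₂| ^ p := by field_simp

/-- Discrete Picone inequality. -/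
theorem picone_inequality (p a₁ a₂ b₁ b₂ : ℝ) (hp : 1 < p)
    (ha₁ : 0 ≤ a₁) (ha₂ : 0 ≤ a₂) (hb₁ : 0 < b₁) (hb₂ : 0 < b₂) :
    |b₁ - b₂| ^ (p - 2) * (b₁ - b₂) *
      (a₁ ^ p / b₁ ^ (p - 1) - a₂ ^ p / b₂ ^ (p - 1)) ≤ |a₁ - a₂| ^ p := by
  rcases lt_trichotomy b₁ b₂ with h | h | h
  · have key := picone_aux p a₂ a₁ b₂ b₁ hp ha₂ ha₁ hb₁ h
    have habs : |a₁ - a₂| = |a₂ - a₁| := abs_sub_comm _ _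
    have e : |b₁ - b₂| ^ (p - 2) * (b₁ - b₂) = -((b₂ - b₁) ^ (p - 1)) := by
      rw [abs_sub_comm, abs_of_pos (by linarith : (0:ℝ) < b₂ - b₁)]
      rw [show p - 1 = (p - 2) + 1 by ring, Real.rpow_add (by linarith), Real.rpow_one]
      ring
    rw [e, habs]
    nlinarith [key]
  · simp [h]
    positivity
  · have key := picone_aux p a₁ a₂ b₁ b₂ hp ha₁ ha₂ hb₂ h
    have e : |b₁ - b₂| ^ (p - 2) * (b₁ - b₂) = (b₁ - b₂) ^ (p - 1) := by
      rw [abs_of_pos (by linarith : (0:ℝ) < b₁ - b₂)]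
      rw [show p - 1 = (p - 2) + 1 by ring, Real.rpow_add (by linarith), Real.rpow_one]
    rw [e]; exact key
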